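/- If X is a normal space in which every subset is Gδ (a Q-space), then B₁(X) = F(X); in particular B₁(X) is a von Neumann regular ring. -/

import Mathlib

open Filter Topology
section Helpers
open Set

def IsBaireOne {X : Type*} [TopologicalSpace X] (f : X → ℝ) : Prop :=
  ∃ F : ℕ → X → ℝ, (∀ n, Continuous (F n)) ∧
    ∀ x, Filter.Tendsto (fun n => F n x) Filter.atTop (nhds (f x))

def B1 (X : Type*) [TopologicalSpace X] : Subring (X → ℝ) where
  carrier := {f | IsBaireOne f}
  zero_mem' := ⟨fun _ _ => 0, fun _ => continuous_const, fun _ => tendsto_const_nhds⟩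
  one_mem' := ⟨fun _ _ => 1, fun _ => continuous_const, fun _ => tendsto_const_nhds⟩
  add_mem' := by
    rintro f g ⟨F, hF, hFf⟩ ⟨G, hG, hGg⟩
    exact ⟨fun n => F n + G n, fun n => (hF n).add (hG n), fun x => (hFf x).add (hGg x)⟩
  mul_mem' := by
    rintro f g ⟨F, hF, hFf⟩ ⟨G, hG, hGg⟩
    exact ⟨fun n => F n * G n, fun n => (hF n).mul (hG n), fun x => (hFf x).mul (hGg x)⟩
  neg_mem' := by
    rintro f ⟨F, hF, hFf⟩
    exact ⟨fun n => -F n, fun n => (hF n).neg, fun x => (hFf x).neg⟩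

def zset {X : Type*} [TopologicalSpace X] (f : ↥(B1 X)) : Set X := {x | (f : X → ℝ) x = 0}

noncomputable def chi {X : Type*} (p : X) : X → ℝ := Set.indicator {p} (fun _ => 1)

def IsFsigma {X : Type*} [TopologicalSpace X] (s : Set X) : Prop :=
  ∃ c : ℕ → Set X, (∀ n, IsClosed (c n)) ∧ s = ⋃ n, c n



private lemma exists_fsigma_seq {X : Type*} [TopologicalSpace X]
    (hQ : ∀ s : Set X, IsGδ s) (A : Set X) :
    ∃ C : ℕ → Set X, (∀ n, IsClosed (C n)) ∧ Monotone C ∧ A = ⋃ n, C n := by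
  obtain ⟨U, hU, hUA⟩ := (hQ Aᶜ).eq_iInter_nat
  refine ⟨Set.accumulate (fun n => (U n)ᶜ), ?_, monotone_accumulate, ?_⟩
  · intro n
    rw [Set.accumulate_def]
    exact (Set.finite_Iic n).isClosed_biUnion fun i _ => (hU i).isClosed_compl
  · rw [Set.iUnion_accumulate, ← Set.compl_iInter, ← hUA, compl_compl]

private lemma indicator_approx {X : Type*} [TopologicalSpace X] [NormalSpace X]
    (hQ : ∀ s : Set X, IsGδ s) (A : Set X) :
    ∃ φ : ℕ → X → ℝ, (∀ n, Continuous (φ n)) ∧ (∀ n x, φ n x ∈ Set.Icc (0:ℝ) 1) ∧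
      ∀ x, Tendsto (fun n => φ n x) atTop (𝓝 (A.indicator (fun _ => (1:ℝ)) x)) := by
  obtain ⟨C, hC, hCm, hCA⟩ := exists_fsigma_seq hQ A
  obtain ⟨D, hD, hDm, hDA⟩ := exists_fsigma_seq hQ Aᶜ
  have hdisj : ∀ n, Disjoint (D n) (C n) := by
    intro n
    refine Set.disjoint_left.2 fun x hx hx' => ?_
    have h1 : x ∈ A := hCA ▸ Set.mem_iUnion.2 ⟨n, hx'⟩
    have h2 : x ∈ Aᶜ := hDA ▸ Set.mem_iUnion.2 ⟨n, hx⟩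
    exact h2 h1
  choose φ h0 h1 hmem using fun n =>
    exists_continuous_zero_one_of_isClosed (hD n) (hC n) (hdisj n)
  refine ⟨fun n => φ n, fun n => (φ n).continuous, fun n x => hmem n x, fun x => ?_⟩
  by_cases hx : x ∈ A
  · rw [Set.indicator_of_mem hx]
    obtain ⟨n, hn⟩ := Set.mem_iUnion.1 (hCA ▸ hx)
    refine tendsto_atTop_of_eventually_const (i₀ := n) fun m hm => ?_
    simpa using h1 m (hCm hm hn)
  · rw [Set.indicator_of_notMem hx]
    obtain ⟨n, hn⟩ := Set.mem_iUnion.1 (by rw [← hDA]; exact hx)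
    refine tendsto_atTop_of_eventually_const (i₀ := n) fun m hm => ?_
    simpa using h0 m (hDm hm hn)

private lemma floor_double (s : ℝ) : ⌊2*s⌋ = 2*⌊s⌋ ∨ ⌊2*s⌋ = 2*⌊s⌋+1 := by
  have h1 : (2*⌊s⌋ : ℤ) ≤ ⌊2*s⌋ := by
    rw [Int.le_floor]; push_cast
    nlinarith [Int.floor_le s]
  have h2 : ⌊2*s⌋ < 2*⌊s⌋ + 2 := by
    rw [Int.floor_lt]; push_cast
    nlinarith [Int.lt_floor_add_one s]
  omega



private lemma baireOne_all {X : Type*} [TopologicalSpace X] [NormalSpace X]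
    (hQ : ∀ s : Set X, IsGδ s) (f : X → ℝ) : IsBaireOne f := by
  classical
  set g : X → ℝ := fun x => (f x / (1 + |f x|) + 1) / 2 with hg
  have hpos : ∀ x, (0:ℝ) < 1 + |f x| := fun x => by positivity
  have habs : ∀ x, |f x / (1 + |f x|)| < 1 := by
    intro x
    rw [abs_div, abs_of_pos (hpos x), div_lt_one (hpos x)]
    linarith [abs_nonneg (f x)]
  have hg01 : ∀ x, g x ∈ Set.Ioo (0:ℝ) 1 := by
    intro x
    have h2 := abs_lt.1 (habs x)
    constructor <;> simp only [hg] <;> nlinarith [h2.1, h2.2]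
  set B : ℕ → Set X := fun n => {x | ⌊2^(n+1) * g x⌋ = 2 * ⌊2^n * g x⌋ + 1} with hB
  choose φ hφc hφ01 hφt using fun n => indicator_approx hQ (B n)
  -- partial sums identity
  have key : ∀ x N, ∑ n ∈ Finset.range N,
      (2:ℝ)⁻¹^(n+1) * (B n).indicator (fun _ => (1:ℝ)) x = (⌊2^N * g x⌋ : ℝ) / 2^N := by
    intro x N
    induction N with
    | zero =>
      have h0 : ⌊g x⌋ = 0 := by
        rw [Int.floor_eq_zero_iff]
        exact Set.mem_Ico.2 ⟨(hg01 x).1.le, (hg01 x).2⟩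
      simp [h0]
    | succ N ih =>
      rw [Finset.sum_range_succ, ih]
      have hd := floor_double (2^N * g x)
      have h2 : (2:ℝ)^(N+1) * g x = 2 * (2^N * g x) := by ring
      rcases hd with hd | hd
      · have hxB : x ∉ B N := by
          simp only [hB, Set.mem_setOf_eq, h2, hd]
          omega
        rw [Set.indicator_of_notMem hxB, h2, hd]
        push_cast
        field_simp
        ring
      · have hxB : x ∈ B N := by
          simp only [hB, Set.mem_setOf_eq, h2, hd]
        rw [Set.indicator_of_mem hxB, h2, hd]
        push_cast
        rw [inv_pow]
        field_simp
        ring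
  -- floors tend to the value
  have floor_tendsto : ∀ x, Tendsto (fun N => (⌊2^N * g x⌋ : ℝ) / 2^N) atTop (𝓝 (g x)) := by
    intro x
    have hup : ∀ N, (⌊2^N * g x⌋ : ℝ) / 2^N ≤ g x := by
      intro N
      rw [div_le_iff₀ (by positivity)]
      calc ((⌊2^N * g x⌋ : ℝ)) ≤ 2^N * g x := Int.floor_le _
        _ = g x * 2^N := by ring
    have hlow : ∀ N, g x - (2⁻¹:ℝ)^N ≤ (⌊2^N * g x⌋ : ℝ) / 2^N := by
      intro N
      rw [le_div_iff₀ (by positivity : (0:ℝ) < 2^N)]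
      have := Int.lt_floor_add_one (2^N * g x)
      have h2N : ((2:ℝ)⁻¹)^N * 2^N = 1 := by
        rw [← mul_pow]; norm_num
      nlinarith [this]
    have h1 : Tendsto (fun N : ℕ => g x - (2⁻¹:ℝ)^N) atTop (𝓝 (g x)) := by
      have := tendsto_pow_atTop_nhds_zero_of_lt_one (by norm_num : (0:ℝ) ≤ 2⁻¹)
        (by norm_num : (2⁻¹:ℝ) < 1)
      simpa using tendsto_const_nhds.sub this
    exact tendsto_of_tendsto_of_tendsto_of_le_of_le h1 tendsto_const_nhds hlow hup
  -- diagonal sequence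
  set G : ℕ → X → ℝ := fun N x => ∑ n ∈ Finset.range N, (2:ℝ)⁻¹^(n+1) * φ n N x with hG
  have hGc : ∀ N, Continuous (G N) := by
    intro N
    exact continuous_finset_sum _ fun n _ => continuous_const.mul (hφc n N)
  have hGt : ∀ x, Tendsto (fun N => G N x) atTop (𝓝 (g x)) := by
    intro x
    set a : ℕ → ℝ := fun n => (2:ℝ)⁻¹^(n+1) * (B n).indicator (fun _ => (1:ℝ)) x with ha
    set c : ℕ → ℕ → ℝ := fun N n => if n < N then (2:ℝ)⁻¹^(n+1) * φ n N x else 0 with hc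
    have hbound : Summable (fun n : ℕ => (2:ℝ)⁻¹^(n+1)) := by
      apply Summable.comp_injective (summable_geometric_of_lt_one (by norm_num) (by norm_num))
        (add_left_injective 1)
    have hab : ∀ n, Tendsto (fun N => c N n) atTop (𝓝 (a n)) := by
      intro n
      apply Tendsto.congr' (f₁ := fun N => (2:ℝ)⁻¹^(n+1) * φ n N x)
      · filter_upwards [eventually_gt_atTop n] with N hN
        simp [hc, hN]
      · exact (hφt n x).const_mul _
    have h_bd : ∀ N n, ‖c N n‖ ≤ (2:ℝ)⁻¹^(n+1) := by
      intro N n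
      simp only [hc]
      split
      · rw [Real.norm_eq_abs, abs_mul, abs_of_nonneg (by positivity : (0:ℝ) ≤ (2:ℝ)⁻¹^(n+1))]
        have h01 := hφ01 n N x
        calc (2:ℝ)⁻¹^(n+1) * |φ n N x| ≤ (2:ℝ)⁻¹^(n+1) * 1 := by
              apply mul_le_mul_of_nonneg_left _ (by positivity)
              rw [abs_of_nonneg h01.1]; exact h01.2
          _ = (2:ℝ)⁻¹^(n+1) := by ring
      · simp only [norm_zero]; positivity
    have hmain := tendsto_tsum_of_dominated_convergence hbound hab
      (Filter.Eventually.of_forall fun N => h_bd N)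
    have htsum_eq : ∀ N, ∑' n, c N n = G N x := by
      intro N
      rw [tsum_eq_sum (s := Finset.range N) (by
        intro n hn
        have h' : ¬ n < N := by simpa using hn
        simp [hc, h'])]
      apply Finset.sum_congr rfl
      intro n hn
      simp [hc, Finset.mem_range.1 hn]
    have hsum_a : ∑' n, a n = g x := by
      have hnn : ∀ n, 0 ≤ a n := by
        intro n
        simp only [ha]
        apply mul_nonneg (by positivity)
        exact Set.indicator_nonneg (fun _ _ => zero_le_one) x
      have hpt : Tendsto (fun N => ∑ n ∈ Finset.range N, a n) atTop (𝓝 (g x)) := by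
        apply Tendsto.congr (fun N => (key x N).symm)
        exact floor_tendsto x
      exact ((hasSum_iff_tendsto_nat_of_nonneg hnn _).2 hpt).tsum_eq
    rw [← hsum_a]
    exact Tendsto.congr (fun N => htsum_eq N) hmain
  -- transport back through the homeomorphism
  refine ⟨fun N x =>
    (max (-(1 - 1/((N:ℝ)+2))) (min (1 - 1/((N:ℝ)+2)) (2 * G N x - 1))) /
      (1 - |max (-(1 - 1/((N:ℝ)+2))) (min (1 - 1/((N:ℝ)+2)) (2 * G N x - 1))|), ?_, ?_⟩
  · intro N
    set aN : ℝ := 1 - 1/((N:ℝ)+2) with haN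
    have haN0 : 0 ≤ aN := by
      have : 1/((N:ℝ)+2) ≤ 1 := by
        rw [div_le_one (by positivity)]
        linarith [Nat.cast_nonneg (α := ℝ) N]
      simp only [haN]; linarith
    have haN1 : aN < 1 := by
      have : 0 < 1/((N:ℝ)+2) := by positivity
      simp only [haN]; linarith
    have hz : Continuous (fun x => max (-aN) (min aN (2 * G N x - 1))) :=
      continuous_const.max (continuous_const.min
        ((continuous_const.mul (hGc N)).sub continuous_const))
    have hzb : ∀ x, |max (-aN) (min aN (2 * G N x - 1))| ≤ aN := by
      intro x
      rw [abs_le]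
      constructor
      · exact le_max_left _ _
      · exact max_le (by linarith) (min_le_left _ _)
    have hne : ∀ x, (1:ℝ) - |max (-aN) (min aN (2 * G N x - 1))| ≠ 0 := by
      intro x
      have hlt : |max (-aN) (min aN (2 * G N x - 1))| < 1 := lt_of_le_of_lt (hzb x) haN1
      intro h
      rw [sub_eq_zero] at h
      rw [← h] at hlt
      exact lt_irrefl _ hlt
    exact hz.div (continuous_const.sub hz.abs) hne
  · intro x
    set y : ℝ := 2 * g x - 1 with hy
    have hyf : y = f x / (1 + |f x|) := by simp only [hy, hg]; ring
    have hy1 : |y| < 1 := hyf ▸ habs x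
    have hw : Tendsto (fun N => 2 * G N x - 1) atTop (𝓝 y) := by
      have h1 := ((hGt x).const_mul 2).sub (tendsto_const_nhds (x := (1:ℝ)))
      simpa using h1
    set ε : ℝ := (1 - |y|)/2 with hε
    have hε0 : 0 < ε := by simp only [hε]; linarith
    have E1 : ∀ᶠ N in atTop, |2 * G N x - 1 - y| < ε := by
      have := Metric.tendsto_atTop.1 hw ε hε0
      obtain ⟨N₀, h⟩ := this
      refine eventually_atTop.2 ⟨N₀, fun N hN => ?_⟩
      rw [show |2 * G N x - 1 - y| = dist (2 * G N x - 1) y from (Real.dist_eq _ _).symm]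
      exact h N hN
    have E2 : ∀ᶠ N : ℕ in atTop, 1/((N:ℝ)+2) < ε := by
      have hten : Tendsto (fun N : ℕ => 1/((N:ℝ)+2)) atTop (𝓝 0) := by
        simp only [one_div]
        exact tendsto_inv_atTop_zero.comp
          (tendsto_atTop_add_const_right atTop 2 tendsto_natCast_atTop_atTop)
      exact hten.eventually_lt_const hε0
    have hzeq : ∀ᶠ N : ℕ in atTop,
        max (-(1 - 1/((N:ℝ)+2))) (min (1 - 1/((N:ℝ)+2)) (2 * G N x - 1)) = 2 * G N x - 1 := by
      filter_upwards [E1, E2] with N h1 h2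
      have hwb : |2 * G N x - 1| ≤ |y| + ε := by
        calc |2 * G N x - 1| = |(2 * G N x - 1 - y) + y| := by ring_nf
          _ ≤ |2 * G N x - 1 - y| + |y| := abs_add_le _ _
          _ ≤ |y| + ε := by linarith
      have hya : |y| + ε < 1 - 1/((N:ℝ)+2) := by
        have : |y| + ε = 1 - ε := by simp only [hε]; ring
        linarith
      have hb := abs_le.1 hwb
      rw [min_eq_right (by linarith), max_eq_right (by linarith)]
    have hz : Tendsto (fun N : ℕ =>
        max (-(1 - 1/((N:ℝ)+2))) (min (1 - 1/((N:ℝ)+2)) (2 * G N x - 1))) atTop (𝓝 y) :=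
      hw.congr' (hzeq.mono fun N h => h.symm)
    have hfin : Tendsto (fun N : ℕ =>
        (max (-(1 - 1/((N:ℝ)+2))) (min (1 - 1/((N:ℝ)+2)) (2 * G N x - 1))) /
        (1 - |max (-(1 - 1/((N:ℝ)+2))) (min (1 - 1/((N:ℝ)+2)) (2 * G N x - 1))|))
        atTop (𝓝 (y / (1 - |y|))) := by
      apply hz.div (tendsto_const_nhds.sub hz.abs)
      intro h; rw [sub_eq_zero] at h; rw [← h] at hy1; simp at hy1
    have hyval : y / (1 - |y|) = f x := by
      rw [hyf, abs_div, abs_of_pos (hpos x)]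
      rw [show (1:ℝ) - |f x| / (1 + |f x|) = 1 / (1 + |f x|) by field_simp; ring]
      field_simp
    rw [← hyval]
    exact hfin

end Helpers

theorem stmt_17 {X : Type*} [TopologicalSpace X] [T1Space X] [NormalSpace X]
    (hQ : ∀ s : Set X, IsGδ s) :
    (∀ f : X → ℝ, IsBaireOne f) ∧
      ∀ f : ↥(B1 X), ∃ g : ↥(B1 X), f = f * f * g := by
  refine ⟨fun f => baireOne_all hQ f, fun f => ?_⟩
  classical
  set f₀ : X → ℝ := (f : X → ℝ) with hf₀
  set g₀ : X → ℝ := fun x => if f₀ x = 0 then 0 else (f₀ x)⁻¹ with hg₀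
  refine ⟨⟨g₀, baireOne_all hQ g₀⟩, ?_⟩
  apply Subtype.ext
  funext x
  show f₀ x = ((f * f * ⟨g₀, baireOne_all hQ g₀⟩ : B1 X) : X → ℝ) x
  have : ((f * f * ⟨g₀, baireOne_all hQ g₀⟩ : B1 X) : X → ℝ) x = f₀ x * f₀ x * g₀ x := rfl
  rw [this]
  by_cases h : f₀ x = 0
  · simp [hg₀, h]
  · simp only [hg₀, if_neg h]
    field_simp
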